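/- Let q = 4, let k be a positive even integer, and let F be a finite field with |F| = q^{3k}. Define g : F → F by g(x) = S_{k+1}(x)^2 + S_{2k}(x)^{q^k+1}, and let K be the subfield of F with q^k elements. Suppose a ∈ F satisfies a + a^{q^k} + a^{q^{2k}} ≠ 0. Then there exists y ∈ K such that for all x ∈ F, Tr(a·g(x+y)) + Tr(a·g(x)) = 1, where Tr denotes the absolute trace from F to F_2. Consequently, the number of x ∈ F with Tr(a·g(x)) = 0 equals the number of x ∈ F with Tr(a·g(x)) = 1. -/

import Mathlib

/-- `S q m x = x + x^q + x^{q^2} + ⋯ + x^{q^{m-1}}`. -/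
def S {F : Type*} [Field F] (q m : ℕ) (x : F) : F :=
  ∑ i ∈ Finset.range m, x ^ q ^ i

/-- `g x = S_{k+1}(x)^2 + S_{2k}(x)^{q^k+1}` with `q = 4`. -/
def g {F : Type*} [Field F] (k : ℕ) (x : F) : F :=
  S 4 (k + 1) x ^ 2 + S 4 (2 * k) x ^ (4 ^ k + 1)

section Aux

variable {F : Type*} [Field F] [CharP F 2]

private lemma four_pow_nat (n : ℕ) : (4 : ℕ) ^ n = 2 ^ (2 * n) := by
  rw [pow_mul]; norm_num

private lemma add_pow4 (n : ℕ) (x y : F) :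
    (x + y) ^ (4 : ℕ) ^ n = x ^ (4 : ℕ) ^ n + y ^ (4 : ℕ) ^ n := by
  simp only [four_pow_nat]
  exact add_pow_char_pow x y 2 (2 * n)

private lemma sum_pow4 {ι : Type*} (n : ℕ) (s : Finset ι) (f : ι → F) :
    (∑ i ∈ s, f i) ^ (4 : ℕ) ^ n = ∑ i ∈ s, f i ^ (4 : ℕ) ^ n := by
  simp only [four_pow_nat]
  have h := map_sum (iterateFrobenius F 2 (2 * n)) f s
  simp only [iterateFrobenius_def] at h
  exact h

private lemma sum_pow_four {ι : Type*} (s : Finset ι) (f : ι → F) :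
    (∑ i ∈ s, f i) ^ (4 : ℕ) = ∑ i ∈ s, f i ^ (4 : ℕ) := by
  calc (∑ i ∈ s, f i) ^ (4 : ℕ) = ((∑ i ∈ s, f i) ^ 2) ^ 2 := by rw [← pow_mul]
    _ = ∑ i ∈ s, (f i ^ 2) ^ 2 := by rw [sum_pow_char, sum_pow_char]
    _ = ∑ i ∈ s, f i ^ (4 : ℕ) := by simp [← pow_mul]

private lemma S4_add (m : ℕ) (x y : F) : S 4 m (x + y) = S 4 m x + S 4 m y := by
  unfold S
  rw [← Finset.sum_add_distrib]
  exact Finset.sum_congr rfl fun i _ => add_pow4 i x y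

private lemma S4_pow4 (m n : ℕ) (x : F) :
    (S 4 m x) ^ (4 : ℕ) ^ n = S 4 m (x ^ (4 : ℕ) ^ n) := by
  unfold S
  rw [sum_pow4]
  refine Finset.sum_congr rfl fun i _ => ?_
  rw [← pow_mul, ← pow_mul, mul_comm]

end Aux

theorem stmt_12 {F : Type*} [Field F] [Fintype F] [Algebra (ZMod 2) F]
    (k : ℕ) (hk : 0 < k) (hke : Even k) (hF : Fintype.card F = 4 ^ (3 * k))
    (a : F) (ha : a + a ^ 4 ^ k + a ^ 4 ^ (2 * k) ≠ 0) :
    (∃ y : F, y ^ 4 ^ k = y ∧ ∀ x : F,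
        Algebra.trace (ZMod 2) F (a * g k (x + y)) + Algebra.trace (ZMod 2) F (a * g k x) = 1) ∧
    Nat.card {x : F // Algebra.trace (ZMod 2) F (a * g k x) = 0}
      = Nat.card {x : F // Algebra.trace (ZMod 2) F (a * g k x) = 1} := by
  haveI : CharP F 2 :=
    charP_of_injective_algebraMap (algebraMap (ZMod 2) F).injective 2
  haveI : Module.Finite (ZMod 2) F := Module.Finite.of_finite
  have h2 : (2 : F) = 0 := CharTwo.two_eq_zero
  -- basic power facts
  have hcard : ∀ x : F, x ^ (4 : ℕ) ^ (3 * k) = x := by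
    intro x
    have := FiniteField.pow_card x
    rwa [hF] at this
  have hkk : ∀ x : F, (x ^ (4 : ℕ) ^ k) ^ (4 : ℕ) ^ k = x ^ (4 : ℕ) ^ (2 * k) := by
    intro x; rw [← pow_mul, ← pow_add, two_mul]
  have hk3 : ∀ x : F, (x ^ (4 : ℕ) ^ (2 * k)) ^ (4 : ℕ) ^ k = x := by
    intro x
    rw [← pow_mul, ← pow_add]
    have : 2 * k + k = 3 * k := by ring
    rw [this]; exact hcard x
  -- `x ↦ x^{4^k}` as an algebra automorphism
  have h4k0 : (4 : ℕ) ^ k ≠ 0 := pow_ne_zero k (by norm_num)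
  let σhom : F →ₐ[ZMod 2] F :=
    { toFun := fun x => x ^ (4 : ℕ) ^ k
      map_one' := one_pow _
      map_mul' := fun x y => mul_pow x y _
      map_zero' := zero_pow h4k0
      map_add' := fun x y => add_pow4 k x y
      commutes' := by
        intro r
        fin_cases r
        · show (algebraMap (ZMod 2) F) 0 ^ (4 : ℕ) ^ k = (algebraMap (ZMod 2) F) 0
          simp [zero_pow h4k0]
        · show (algebraMap (ZMod 2) F) 1 ^ (4 : ℕ) ^ k = (algebraMap (ZMod 2) F) 1
          simp [zero_pow h4k0] }
  have σinj : Function.Injective σhom := σhom.toRingHom.injective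
  let σ : F ≃ₐ[ZMod 2] F := AlgEquiv.ofBijective σhom (Finite.injective_iff_bijective.mp σinj)
  have htr : ∀ x : F, Algebra.trace (ZMod 2) F (x ^ (4 : ℕ) ^ k) = Algebra.trace (ZMod 2) F x := by
    intro x
    have := Algebra.trace_eq_of_algEquiv σ x
    simpa [σ, σhom] using this
  -- relative trace lands in K
  have hrel : ∀ x : F,
      (x + x ^ (4 : ℕ) ^ k + x ^ (4 : ℕ) ^ (2 * k)) ^ (4 : ℕ) ^ k
        = x + x ^ (4 : ℕ) ^ k + x ^ (4 : ℕ) ^ (2 * k) := by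
    intro x
    rw [add_pow4, add_pow4, hkk, hk3]
    ring
  -- existence of c in K with trace (a*c) = 1
  have hexc : ∃ c : F, c ^ (4 : ℕ) ^ k = c ∧ Algebra.trace (ZMod 2) F (a * c) = 1 := by
    by_contra hcon
    push_neg at hcon
    have h0 : ∀ c : F, c ^ (4 : ℕ) ^ k = c → Algebra.trace (ZMod 2) F (a * c) = 0 := by
      intro c hc
      have hne := hcon c hc
      have : ∀ v : ZMod 2, v ≠ 1 → v = 0 := by decide
      exact this _ hne
    have hT : ∀ c : F, c ^ (4 : ℕ) ^ k = c →
        Algebra.trace (ZMod 2) F ((a + a ^ (4 : ℕ) ^ k + a ^ (4 : ℕ) ^ (2 * k)) * c) = 0 := by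
      intro c hc
      have hac : (a * c) ^ (4 : ℕ) ^ k = a ^ (4 : ℕ) ^ k * c := by
        rw [mul_pow, hc]
      have hac2 : ((a * c) ^ (4 : ℕ) ^ k) ^ (4 : ℕ) ^ k = a ^ (4 : ℕ) ^ (2 * k) * c := by
        rw [hac, mul_pow, hc, hkk]
      have e1 : (a + a ^ (4 : ℕ) ^ k + a ^ (4 : ℕ) ^ (2 * k)) * c
          = a * c + (a * c) ^ (4 : ℕ) ^ k + ((a * c) ^ (4 : ℕ) ^ k) ^ (4 : ℕ) ^ k := by
        rw [hac2, hac]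
        ring
      rw [e1, map_add, map_add, htr, htr, htr, h0 c hc]
      simp
    have hall : ∀ e : F, e ^ (4 : ℕ) ^ k = e → Algebra.trace (ZMod 2) F e = 0 := by
      intro e he
      set t : F := a + a ^ (4 : ℕ) ^ k + a ^ (4 : ℕ) ^ (2 * k) with htdef
      have ht : t ≠ 0 := by
        simpa [htdef] using ha
      have hcfix : (t⁻¹ * e) ^ (4 : ℕ) ^ k = t⁻¹ * e := by
        rw [mul_pow, inv_pow, hrel a, he]
      have := hT (t⁻¹ * e) hcfix
      rwa [← mul_assoc, mul_inv_cancel₀ ht, one_mul] at this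
    have hzero : ∀ x : F, Algebra.trace (ZMod 2) F x = 0 := by
      intro x
      have hfix := hrel x
      have := hall _ hfix
      rw [map_add, map_add, htr] at this
      have htr2 : Algebra.trace (ZMod 2) F (x ^ (4 : ℕ) ^ (2 * k))
          = Algebra.trace (ZMod 2) F x := by
        rw [← hkk, htr, htr]
      rw [htr2] at this
      have h3 : ∀ v : ZMod 2, v + v + v = 0 → v = 0 := by decide
      exact h3 _ this
    have := Algebra.trace_ne_zero (ZMod 2) F
    apply this
    ext x
    simpa using hzero x
  obtain ⟨c, hcfix, hc1⟩ := hexc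
  -- the map ψ : K → K, y ↦ (S_k y + y)^2 is bijective
  set K := {y : F // y ^ (4 : ℕ) ^ k = y} with hK
  have hSfix : ∀ y : F, y ^ (4 : ℕ) ^ k = y → (S 4 k y) ^ (4 : ℕ) ^ k = S 4 k y := by
    intro y hy
    rw [S4_pow4, hy]
  have hmem : ∀ y : K, ((S 4 k y.1 + y.1) ^ 2) ^ (4 : ℕ) ^ k = (S 4 k y.1 + y.1) ^ 2 := by
    intro y
    rw [← pow_mul, mul_comm, pow_mul, add_pow4, hSfix y.1 y.2, y.2]
  let ψ : K → K := fun y => ⟨(S 4 k y.1 + y.1) ^ 2, hmem y⟩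
  have ψinj : Function.Injective ψ := by
    intro y y' h
    have hval : (S 4 k y.1 + y.1) ^ 2 = (S 4 k y'.1 + y'.1) ^ 2 := congrArg Subtype.val h
    have hsq : S 4 k y.1 + y.1 = S 4 k y'.1 + y'.1 := by
      have := frobenius_inj F 2
      apply this
      simpa [frobenius_def] using hval
    set u : F := y.1 + y'.1 with hu
    have hufix : u ^ (4 : ℕ) ^ k = u := by
      rw [hu, add_pow4, y.2, y'.2]
    have hSu : S 4 k u = u := by
      rw [hu, S4_add]
      linear_combination hsq + (S 4 k y'.1 - y.1) * h2
    -- u^4 = u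
    have e1 : (S 4 k u) ^ (4 : ℕ) = ∑ i ∈ Finset.range k, u ^ (4 : ℕ) ^ (i + 1) := by
      unfold S
      rw [sum_pow_four]
      refine Finset.sum_congr rfl fun i _ => ?_
      rw [← pow_mul, ← pow_succ]
    have e2 : ∑ i ∈ Finset.range k, u ^ (4 : ℕ) ^ (i + 1) = S 4 k u := by
      have ha1 := Finset.sum_range_succ' (fun i => u ^ (4 : ℕ) ^ i) k
      have ha2 := Finset.sum_range_succ (fun i => u ^ (4 : ℕ) ^ i) k
      simp only [pow_zero, pow_one, hufix] at ha1 ha2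
      unfold S
      linear_combination ha2 - ha1
    have hu4 : u ^ (4 : ℕ) = u := by
      conv_lhs => rw [← hSu]
      rw [e1, e2, hSu]
    have hupow : ∀ i : ℕ, u ^ (4 : ℕ) ^ i = u := by
      intro i
      induction i with
      | zero => simp
      | succ n ih => rw [pow_succ, pow_mul, ih, hu4]
    have hSu0 : S 4 k u = 0 := by
      unfold S
      obtain ⟨m, hm⟩ := hke
      simp only [hupow, Finset.sum_const, Finset.card_range, hm, add_nsmul]
      rw [← smul_add, CharTwo.add_self_eq_zero, smul_zero]
    have hu0 : u = 0 := by rw [← hSu, hSu0]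
    have : y.1 = y'.1 := by
      have hy := hu0
      rw [hu] at hy
      linear_combination hy - y'.1 * h2
    exact Subtype.ext this
  have ψsurj : Function.Surjective ψ := Finite.injective_iff_surjective.mp ψinj
  obtain ⟨⟨y, hy⟩, hψy⟩ := ψsurj ⟨c, hcfix⟩
  have hyc : (S 4 k y + y) ^ 2 = c := congrArg Subtype.val hψy
  -- S_{2k} vanishes on K
  have hS2k : S 4 (2 * k) y = 0 := by
    unfold S
    have hterm : ∀ i : ℕ, y ^ (4 : ℕ) ^ (k + i) = y ^ (4 : ℕ) ^ i := fun i => by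
      rw [pow_add, pow_mul, hy]
    rw [two_mul, Finset.sum_range_add]
    simp only [hterm]
    exact CharTwo.add_self_eq_zero _
  -- key decomposition of g
  have hgkey : ∀ x : F, g k (x + y) = g k x + (S 4 k y + y) ^ 2 := by
    intro x
    unfold g
    have hS1 : S 4 (k + 1) (x + y) = S 4 (k + 1) x + (S 4 k y + y) := by
      rw [S4_add]
      congr 1
      unfold S
      rw [Finset.sum_range_succ, hy]
    have hS2 : S 4 (2 * k) (x + y) = S 4 (2 * k) x := by
      rw [S4_add, hS2k, add_zero]
    rw [hS1, hS2, CharTwo.add_sq]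
    ring
  -- the trace identity
  have hmain : ∀ x : F,
      Algebra.trace (ZMod 2) F (a * g k (x + y)) + Algebra.trace (ZMod 2) F (a * g k x) = 1 := by
    intro x
    rw [hgkey x, mul_add, map_add, hyc, hc1]
    have hv : ∀ v : ZMod 2, v + 1 + v = 1 := by decide
    exact hv _
  refine ⟨⟨y, hy, hmain⟩, ?_⟩
  -- the counting statement via the bijection x ↦ x + y
  have hkey2 : ∀ x : F, Algebra.trace (ZMod 2) F (a * g k (x + y))
      = Algebra.trace (ZMod 2) F (a * g k x) + 1 := by
    intro x
    have := hmain x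
    revert this
    generalize Algebra.trace (ZMod 2) F (a * g k (x + y)) = A
    generalize Algebra.trace (ZMod 2) F (a * g k x) = B
    revert A B
    decide
  have hyy : ∀ x : F, x + y + y = x := by
    intro x
    rw [add_assoc, CharTwo.add_self_eq_zero, add_zero]
  refine Nat.card_congr ⟨fun p => ⟨p.1 + y, ?_⟩, fun p => ⟨p.1 + y, ?_⟩, ?_, ?_⟩
  · rw [hkey2, p.2]; decide
  · rw [hkey2, p.2]; decide
  · intro p; exact Subtype.ext (hyy p.1)
  · intro p; exact Subtype.ext (hyy p.1)
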